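/- A priori bound on minimizers' velocity: let L(t,x,v) = K*(v) − V(t,x) with K* ∈ C²(ℝⁿ) uniformly strictly convex (D²K*(v)(Y,Y) ≥ c|Y|² for some c > 0) and V ∈ C² with |∂_t^j ∂_x^q V| ≤ B for j + q ≤ 2. Then for all T > 0 and R > 0 there exists M(R,T) such that for all x, y ∈ ℝⁿ with |x − y| ≤ R and all t ∈ ℝ, every C² solution γ : [t, t+T] → ℝⁿ of the Euler–Lagrange equation that minimizes the action ∫_t^{t+T} L(s,γ(s),γ'(s)) ds among absolutely continuous curves with γ(t) = x, γ(t+T) = y satisfies |γ'(s)| ≤ M(R,T) for all s ∈ [t, t+T]. -/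

import Mathlib

open MeasureTheory

/-- Uniform strict convexity of `Kstar` implies strong monotonicity of the gradient,
hence `c * ‖v - w‖ ≤ ‖∇K*(v) - ∇K*(w)‖`. -/
lemma grad_strong_mono (n : ℕ) (Kstar : (Fin n → ℝ) → ℝ)
    (hK : ContDiff ℝ 2 Kstar) (c : ℝ) (hc : 0 < c)
    (hKconv : ∀ v Y : Fin n → ℝ, c * ‖Y‖ ^ 2 ≤ iteratedFDeriv ℝ 2 Kstar v ![Y, Y])
    (v w : Fin n → ℝ) :
    c * ‖v - w‖ ≤ ‖fderiv ℝ Kstar v - fderiv ℝ Kstar w‖ := by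
  rcases eq_or_ne v w with rfl | hvw
  · simp
  set u := v - w with hu
  have hu0 : 0 < ‖u‖ := by
    rw [norm_pos_iff]
    exact sub_ne_zero_of_ne hvw
  set line : ℝ → (Fin n → ℝ) := fun τ => w + τ • u with hline_def
  have hd1 : Differentiable ℝ (fderiv ℝ Kstar) :=
    (hK.fderiv_right (m := 1) (by norm_num)).differentiable one_ne_zero
  have hline : ∀ τ : ℝ, HasDerivAt line u τ := by
    intro τ
    have h1 : HasDerivAt (fun τ : ℝ => τ • u) ((1 : ℝ) • u) τ :=
      (hasDerivAt_id τ).smul_const u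
    simpa [hline_def] using h1.const_add w
  -- g τ = ∇K*(line τ) u
  set g : ℝ → ℝ := fun τ => fderiv ℝ Kstar (line τ) u with hg_def
  have hg : ∀ τ : ℝ, HasDerivAt g (fderiv ℝ (fderiv ℝ Kstar) (line τ) u u) τ := by
    intro τ
    have hc1 : HasDerivAt (fun τ => fderiv ℝ Kstar (line τ))
        (fderiv ℝ (fderiv ℝ Kstar) (line τ) u) τ :=
      ((hd1 (line τ)).hasFDerivAt).comp_hasDerivAt τ (hline τ)
    have := hc1.clm_apply (hasDerivAt_const τ u)
    simpa using this
  have hglb : ∀ τ : ℝ, c * ‖u‖ ^ 2 ≤ fderiv ℝ (fderiv ℝ Kstar) (line τ) u u := by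
    intro τ
    have := hKconv (line τ) u
    rwa [iteratedFDeriv_two_apply, Matrix.cons_val_zero, Matrix.cons_val_one,
      Matrix.cons_val_zero] at this
  -- φ τ = g τ - c‖u‖² τ is monotone
  set φ : ℝ → ℝ := fun τ => g τ - (c * ‖u‖ ^ 2) * τ with hφ_def
  have hφ : ∀ τ : ℝ, HasDerivAt φ (fderiv ℝ (fderiv ℝ Kstar) (line τ) u u
      - c * ‖u‖ ^ 2) τ := by
    intro τ
    have h2 : HasDerivAt (fun τ : ℝ => (c * ‖u‖ ^ 2) * τ) (c * ‖u‖ ^ 2) τ := by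
      simpa using (hasDerivAt_id τ).const_mul (c * ‖u‖ ^ 2)
    exact (hg τ).sub h2
  have hmono : Monotone φ := by
    apply monotone_of_deriv_nonneg (fun τ => (hφ τ).differentiableAt)
    intro τ
    rw [(hφ τ).deriv]
    linarith [hglb τ]
  have h01 : φ 0 ≤ φ 1 := hmono zero_le_one
  have hg0 : g 0 = fderiv ℝ Kstar w u := by simp [hg_def, hline_def]
  have hg1 : g 1 = fderiv ℝ Kstar v u := by
    have : line 1 = v := by simp [hline_def, hu]
    simp [hg_def, this]
  have hkey : c * ‖u‖ ^ 2 ≤ (fderiv ℝ Kstar v - fderiv ℝ Kstar w) u := by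
    have : c * ‖u‖ ^ 2 ≤ g 1 - g 0 := by
      simp only [hφ_def] at h01; linarith
    rw [hg1, hg0] at this
    simpa [ContinuousLinearMap.sub_apply] using this
  have hle : (fderiv ℝ Kstar v - fderiv ℝ Kstar w) u ≤
      ‖fderiv ℝ Kstar v - fderiv ℝ Kstar w‖ * ‖u‖ := by
    calc (fderiv ℝ Kstar v - fderiv ℝ Kstar w) u
        ≤ ‖(fderiv ℝ Kstar v - fderiv ℝ Kstar w) u‖ := le_abs_self _
      _ ≤ ‖fderiv ℝ Kstar v - fderiv ℝ Kstar w‖ * ‖u‖ :=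
          (fderiv ℝ Kstar v - fderiv ℝ Kstar w).le_opNorm u
  have : c * ‖u‖ * ‖u‖ ≤ ‖fderiv ℝ Kstar v - fderiv ℝ Kstar w‖ * ‖u‖ := by
    nlinarith
  exact le_of_mul_le_mul_right this hu0

/-- A priori bound on the velocity of minimizers: for `L(t,x,v) = K*(v) − V(t,x)`
with `K*` C² uniformly strictly convex and `V` C² with bounded derivatives up to
order 2, for all `T, R > 0` there is `M = M(R,T)` such that any C² solution of the
Euler–Lagrange equation joining `x` to `y` with `‖x - y‖ ≤ R` in time `T`, which
minimizes the action among absolutely continuous curves with the same endpoints,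
has velocity bounded by `M`. -/
theorem velocity_bound_of_minimizer (n : ℕ)
    (Kstar : (Fin n → ℝ) → ℝ) (V : ℝ → (Fin n → ℝ) → ℝ)
    (hK : ContDiff ℝ 2 Kstar) (c : ℝ) (hc : 0 < c)
    (hKconv : ∀ v Y : Fin n → ℝ, c * ‖Y‖ ^ 2 ≤ iteratedFDeriv ℝ 2 Kstar v ![Y, Y])
    (B : ℝ) (hV : ContDiff ℝ 2 fun p : ℝ × (Fin n → ℝ) => V p.1 p.2)
    (hVb : ∀ j ≤ 2, ∀ p : ℝ × (Fin n → ℝ),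
      ‖iteratedFDeriv ℝ j (fun q : ℝ × (Fin n → ℝ) => V q.1 q.2) p‖ ≤ B)
    (T R : ℝ) (hT : 0 < T) (hR : 0 < R) :
    ∃ M : ℝ, ∀ x y : Fin n → ℝ, ‖x - y‖ ≤ R → ∀ t : ℝ,
      ∀ γ : ℝ → (Fin n → ℝ), ContDiff ℝ 2 γ → γ t = x → γ (t + T) = y →
      -- γ solves the Euler–Lagrange equation d/ds ∂_v L = ∂_x L on [t, t+T]
      (∀ s ∈ Set.Icc t (t + T),
        HasDerivAt (fun σ => fderiv ℝ Kstar (deriv γ σ))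
          (-(fderiv ℝ (fun z => V s z) (γ s))) s) →
      -- γ minimizes the action among absolutely continuous curves from x to y
      (∀ η d : ℝ → (Fin n → ℝ), η t = x → η (t + T) = y →
        IntervalIntegrable d volume t (t + T) →
        (∀ s1 ∈ Set.Icc t (t + T), ∀ s2 ∈ Set.Icc t (t + T), s1 ≤ s2 →
          η s2 - η s1 = ∫ s in s1..s2, d s) →
        IntervalIntegrable (fun s => Kstar (d s) - V s (η s)) volume t (t + T) →
        (∫ s in t..(t + T), (Kstar (deriv γ s) - V s (γ s))) ≤
          ∫ s in t..(t + T), (Kstar (d s) - V s (η s))) →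
      ∀ s ∈ Set.Icc t (t + T), ‖deriv γ s‖ ≤ M := by
  -- `B ≥ 0`
  have hB0 : 0 ≤ B := le_trans (norm_nonneg _) (hVb 0 (by norm_num) (0, 0))
  refine ⟨R / T + B * T / c, ?_⟩
  intro x y hxy t γ hγ hγt hγT hEL _ s hs
  -- the spatial derivative of V is bounded by B
  have hVgrad : ∀ (σ : ℝ) (z : Fin n → ℝ), ‖fderiv ℝ (fun z => V σ z) z‖ ≤ B := by
    intro σ z
    set W : ℝ × (Fin n → ℝ) → ℝ := fun p => V p.1 p.2 with hW_def
    have hWd : DifferentiableAt ℝ W (σ, z) :=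
      (hV.differentiable two_ne_zero).differentiableAt
    have hins : HasFDerivAt (fun z : Fin n → ℝ => ((σ, z) : ℝ × (Fin n → ℝ)))
        (ContinuousLinearMap.inr ℝ ℝ (Fin n → ℝ)) z :=
      HasFDerivAt.prodMk (hasFDerivAt_const σ z) (hasFDerivAt_id z)
    have hcomp : HasFDerivAt (fun z => V σ z)
        ((fderiv ℝ W (σ, z)).comp (ContinuousLinearMap.inr ℝ ℝ (Fin n → ℝ))) z :=
      (hWd.hasFDerivAt).comp z hins
    rw [hcomp.fderiv]
    have hB1 : ‖fderiv ℝ W (σ, z)‖ ≤ B := by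
      have := hVb 1 (by norm_num) (σ, z)
      rwa [← norm_iteratedFDeriv_fderiv, norm_iteratedFDeriv_zero] at this
    have hinrnorm : ‖ContinuousLinearMap.inr ℝ ℝ (Fin n → ℝ)‖ ≤ 1 := by
      apply ContinuousLinearMap.opNorm_le_bound _ zero_le_one
      intro z
      simp [Prod.norm_def]
    calc ‖(fderiv ℝ W (σ, z)).comp (ContinuousLinearMap.inr ℝ ℝ (Fin n → ℝ))‖
        ≤ ‖fderiv ℝ W (σ, z)‖ * ‖ContinuousLinearMap.inr ℝ ℝ (Fin n → ℝ)‖ :=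
          ContinuousLinearMap.opNorm_comp_le _ _
      _ ≤ B * 1 := by
          exact mul_le_mul hB1 hinrnorm (norm_nonneg _) hB0
      _ = B := mul_one B
  -- oscillation of ∇K*(γ') on [t, t+T] is ≤ B*T
  have hIcc : Convex ℝ (Set.Icc t (t + T)) := convex_Icc _ _
  have hosc : ∀ s1 ∈ Set.Icc t (t + T), ∀ s2 ∈ Set.Icc t (t + T),
      ‖fderiv ℝ Kstar (deriv γ s2) - fderiv ℝ Kstar (deriv γ s1)‖ ≤ B * T := by
    intro s1 hs1 s2 hs2
    have hb : ∀ σ ∈ Set.Icc t (t + T),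
        ‖-(fderiv ℝ (fun z => V σ z) (γ σ))‖ ≤ B := by
      intro σ hσ; rw [norm_neg]; exact hVgrad σ (γ σ)
    have := Convex.norm_image_sub_le_of_norm_hasDerivWithin_le
      (𝕜 := ℝ) (f := fun σ => fderiv ℝ Kstar (deriv γ σ))
      (f' := fun σ => -(fderiv ℝ (fun z => V σ z) (γ σ)))
      (s := Set.Icc t (t + T)) (x := s1) (y := s2)
      (fun σ hσ => (hEL σ hσ).hasDerivWithinAt) hb hIcc hs1 hs2
    calc ‖fderiv ℝ Kstar (deriv γ s2) - fderiv ℝ Kstar (deriv γ s1)‖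
        ≤ B * ‖s2 - s1‖ := this
      _ ≤ B * T := by
          apply mul_le_mul_of_nonneg_left _ hB0
          rw [Real.norm_eq_abs, abs_sub_le_iff]
          constructor <;> linarith [hs1.1, hs1.2, hs2.1, hs2.2]
  -- hence oscillation of γ' is ≤ B*T/c
  have hoscv : ∀ s1 ∈ Set.Icc t (t + T), ∀ s2 ∈ Set.Icc t (t + T),
      ‖deriv γ s2 - deriv γ s1‖ ≤ B * T / c := by
    intro s1 hs1 s2 hs2
    have h1 := grad_strong_mono n Kstar hK c hc hKconv (deriv γ s2) (deriv γ s1)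
    have h2 := hosc s1 hs1 s2 hs2
    rw [le_div_iff₀ hc]
    calc ‖deriv γ s2 - deriv γ s1‖ * c = c * ‖deriv γ s2 - deriv γ s1‖ := mul_comm _ _
      _ ≤ ‖fderiv ℝ Kstar (deriv γ s2) - fderiv ℝ Kstar (deriv γ s1)‖ := h1
      _ ≤ B * T := h2
  -- integral of deriv γ over [t, t+T] is y - x
  have hdγcont : Continuous (deriv γ) := hγ.continuous_deriv one_le_two
  have hγdiff : Differentiable ℝ γ := hγ.differentiable two_ne_zero
  have hint : (∫ σ in t..(t + T), deriv γ σ) = y - x := by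
    rw [intervalIntegral.integral_deriv_eq_sub (fun σ _ => hγdiff.differentiableAt)
      (hdγcont.intervalIntegrable t (t + T))]
    rw [hγt, hγT]
  -- T • deriv γ s - (y - x) = ∫ (deriv γ s - deriv γ σ) dσ
  have hconst : (∫ _ in t..(t + T), deriv γ s) = T • deriv γ s := by
    rw [intervalIntegral.integral_const]
    congr 1
    ring
  have hdiffint : (∫ σ in t..(t + T), (deriv γ s - deriv γ σ))
      = T • deriv γ s - (y - x) := by
    rw [intervalIntegral.integral_sub
      ((continuous_const).intervalIntegrable t (t + T))
      (hdγcont.intervalIntegrable t (t + T)), hconst, hint]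
  have hbound : ‖T • deriv γ s - (y - x)‖ ≤ (B * T / c) * T := by
    rw [← hdiffint]
    have := intervalIntegral.norm_integral_le_of_norm_le_const
      (f := fun σ => deriv γ s - deriv γ σ) (C := B * T / c) (a := t) (b := t + T) ?_
    · calc ‖∫ σ in t..(t + T), (deriv γ s - deriv γ σ)‖
          ≤ (B * T / c) * |t + T - t| := this
        _ = (B * T / c) * T := by rw [abs_of_pos (by linarith : (0:ℝ) < t + T - t)]; ring_nf
    · intro σ hσ
      have hσ' : σ ∈ Set.Icc t (t + T) := by
        rw [Set.uIoc_of_le (by linarith : t ≤ t + T)] at hσ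
        exact ⟨le_of_lt hσ.1, hσ.2⟩
      exact hoscv σ hσ' s hs
  -- conclude
  have hyx : ‖y - x‖ ≤ R := by rwa [norm_sub_rev] at hxy
  have hTnorm : ‖T • deriv γ s‖ = T * ‖deriv γ s‖ := by
    rw [norm_smul, Real.norm_eq_abs, abs_of_pos hT]
  have h5 : ‖T • deriv γ s‖ - ‖y - x‖ ≤ ‖T • deriv γ s - (y - x)‖ :=
    norm_sub_norm_le _ _
  have hmain : T * ‖deriv γ s‖ ≤ R + (B * T / c) * T := by
    rw [← hTnorm]; linarith
  have hfin : ‖deriv γ s‖ ≤ (R + (B * T / c) * T) / T := by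
    rw [le_div_iff₀ hT]; linarith
  calc ‖deriv γ s‖ ≤ (R + (B * T / c) * T) / T := hfin
    _ = R / T + B * T / c := by
        rw [add_div, mul_div_assoc, div_self (ne_of_gt hT), mul_one]
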